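/- Suppose real numbers a_π, b_π indexed by a finite set Π of size n satisfy: (i) n^{-1} Σ_π (a_π − b_π)² ≤ δ₂², (ii) the empirical CDF F̃(x) = n^{-1} Σ_π 1{b_π < x} satisfies sup_x |F̃(x) − F(x)| ≤ δ₁ for a CDF F that is D-Lipschitz. Then the empirical CDF F̂(x) = n^{-1} Σ_π 1{a_π < x} satisfies sup_x |F̂(x) − F̃(x)| ≤ 2δ₁ + 2δ₂ + 2D√δ₂. -/
import Mathlib


/-- Suppose reals `a_π, b_π` indexed by a finite set `Π` of size `n`
satisfy (i) `n⁻¹ Σ_π (a_π - b_π)² ≤ δ₂²`, and (ii) the empirical CDF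
`F̃(x) = n⁻¹ Σ_π 1{b_π < x}` satisfies `sup_x |F̃(x) - F(x)| ≤ δ₁` for a CDF `F`
that is `D`-Lipschitz.  Then the empirical CDF `F̂(x) = n⁻¹ Σ_π 1{a_π < x}` satisfies
`sup_x |F̂(x) - F̃(x)| ≤ 2δ₁ + 2δ₂ + 2D√δ₂`. -/
theorem stmt12 {ι : Type*} [Fintype ι] (a b : ι → ℝ)
    (δ₁ δ₂ D : ℝ) (hδ₁ : 0 < δ₁) (hδ₂ : 0 < δ₂) (hD : 0 < D)
    (F : ℝ → ℝ) (hFmono : Monotone F) (hF0 : ∀ x, 0 ≤ F x) (hF1 : ∀ x, F x ≤ 1)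
    (hLip : ∀ x y, |F x - F y| ≤ D * |x - y|)
    (hmse : (∑ π : ι, (a π - b π) ^ 2) / (Fintype.card ι : ℝ) ≤ δ₂ ^ 2)
    (herg : ∀ x : ℝ,
      |(∑ π : ι, (if b π < x then (1 : ℝ) else 0)) / (Fintype.card ι : ℝ) - F x| ≤ δ₁) :
    ∀ x : ℝ,
      |(∑ π : ι, (if a π < x then (1 : ℝ) else 0)) / (Fintype.card ι : ℝ)
        - (∑ π : ι, (if b π < x then (1 : ℝ) else 0)) / (Fintype.card ι : ℝ)|
      ≤ 2 * δ₁ + 2 * δ₂ + 2 * D * Real.sqrt δ₂ := by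
  intro x
  set ε : ℝ := Real.sqrt δ₂ with hε
  have hεpos : 0 < ε := Real.sqrt_pos.mpr hδ₂
  have hε2 : ε ^ 2 = δ₂ := Real.sq_sqrt hδ₂.le
  rcases Nat.eq_zero_or_pos (Fintype.card ι) with hc | hc
  · simp only [hc, Nat.cast_zero, div_zero, sub_zero, abs_zero]
    positivity
  have hn : (0:ℝ) < (Fintype.card ι : ℝ) := by exact_mod_cast hc
  set n : ℝ := (Fintype.card ι : ℝ) with hnd
  -- Chebyshev-type bound on the quadratic term
  have hq : (∑ π : ι, (a π - b π) ^ 2 / ε ^ 2) / n ≤ δ₂ := by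
    rw [← Finset.sum_div, div_right_comm,
      div_le_iff₀ (by positivity : (0:ℝ) < ε ^ 2), hε2]
    calc (∑ π : ι, (a π - b π) ^ 2) / n ≤ δ₂ ^ 2 := hmse
      _ = δ₂ * δ₂ := by ring
  -- upper bound
  have hup : (∑ π : ι, (if a π < x then (1:ℝ) else 0)) / n
      ≤ (∑ π : ι, (if b π < x + ε then (1:ℝ) else 0)) / n + δ₂ := by
    have hpt : ∀ π : ι, (if a π < x then (1:ℝ) else 0)
        ≤ (if b π < x + ε then (1:ℝ) else 0) + (a π - b π) ^ 2 / ε ^ 2 := by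
      intro π
      have hr : (0:ℝ) ≤ (a π - b π) ^ 2 / ε ^ 2 := by positivity
      split_ifs with h1 h2 h2
      · linarith
      · push_neg at h2
        rw [zero_add, le_div_iff₀ (by positivity : (0:ℝ) < ε ^ 2)]
        nlinarith
      · linarith
      · linarith
    have hsum := Finset.sum_le_sum (fun π (_ : π ∈ Finset.univ) => hpt π)
    rw [Finset.sum_add_distrib] at hsum
    have h2 : (∑ π : ι, (if a π < x then (1:ℝ) else 0)) / n
        ≤ (∑ π : ι, ((if b π < x + ε then (1:ℝ) else 0) + (a π - b π) ^ 2 / ε ^ 2)) / n := by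
      gcongr
      exact hpt _
    rw [Finset.sum_add_distrib, add_div] at h2
    linarith
  -- lower bound
  have hlo : (∑ π : ι, (if b π < x - ε then (1:ℝ) else 0)) / n - δ₂
      ≤ (∑ π : ι, (if a π < x then (1:ℝ) else 0)) / n := by
    have hpt : ∀ π : ι, (if b π < x - ε then (1:ℝ) else 0)
        ≤ (if a π < x then (1:ℝ) else 0) + (a π - b π) ^ 2 / ε ^ 2 := by
      intro π
      have hr : (0:ℝ) ≤ (a π - b π) ^ 2 / ε ^ 2 := by positivity
      split_ifs with h1 h2 h2
      · linarith
      · push_neg at h2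
        rw [zero_add, le_div_iff₀ (by positivity : (0:ℝ) < ε ^ 2)]
        nlinarith
      · linarith
      · linarith
    have hsum := Finset.sum_le_sum (fun π (_ : π ∈ Finset.univ) => hpt π)
    rw [Finset.sum_add_distrib] at hsum
    have h2 : (∑ π : ι, (if b π < x - ε then (1:ℝ) else 0)) / n
        ≤ (∑ π : ι, ((if a π < x then (1:ℝ) else 0) + (a π - b π) ^ 2 / ε ^ 2)) / n := by
      gcongr
      exact hpt _
    rw [Finset.sum_add_distrib, add_div] at h2
    linarith
  -- combine with the ergodic and Lipschitz estimates
  have e1 := abs_le.mp (herg (x + ε))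
  have e2 := abs_le.mp (herg (x - ε))
  have e3 := abs_le.mp (herg x)
  have l1 : |F (x + ε) - F x| ≤ D * ε := by
    have h := hLip (x + ε) x
    simpa [abs_of_pos hεpos] using h
  have l2 : |F x - F (x - ε)| ≤ D * ε := by
    have h := hLip x (x - ε)
    have h' : |x - (x - ε)| = ε := by rw [abs_of_pos (by linarith)]; ring
    rw [h'] at h
    exact h
  have l1' := abs_le.mp l1
  have l2' := abs_le.mp l2
  rw [abs_le]
  constructor
  · linarith [l2'.2, e2.1, e3.2, mul_pos hD hεpos, hlo]
  · linarith [l1'.2, e1.2, e3.1, mul_pos hD hεpos, hup]
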